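/- Let R be a commutative ring and n ≥ 1. Call a nonzero multi-index μ ∈ ℕⁿ primitive if gcd(μ₁,...,μₙ) = 1. The map sending a family (f_μ)_μ, indexed by the primitive multi-indices μ and with each f_μ ∈ Λ(R) = 1 + tR[[t]], to the product ∏_μ f_μ(t^μ) ∈ Λⁿ(R) = 1 + (t₁,...,tₙ)R[[t₁,...,tₙ]] (an infinite product converging in the coefficientwise topology) is a group isomorphism from the direct product ∏_{μ primitive} Λ(R) onto Λⁿ(R). In particular, the group of big Witt vectors in n variables is canonically isomorphic to an infinite product of copies of the group of big Witt vectors in one variable. -/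

import Mathlib

/-- The coefficientwise (product) topology on multivariate formal power series,
induced by a topology on the coefficient ring. -/
instance mvPowerSeriesPiTopology (σ : Type*) (R : Type*) [TopologicalSpace R] :
    TopologicalSpace (MvPowerSeries σ R) :=
  Pi.topologicalSpace

open Classical in
/-- Substitution of the monomial `t^ν = t₁^{ν₁}⋯tₙ^{νₙ}` for `t` in a one-variable
formal power series `f = Σᵢ aᵢ tⁱ`: the result is `f(t^ν) = Σᵢ aᵢ t^{iν}`. -/
noncomputable def substMonomial {R : Type*} [CommRing R] {n : ℕ}
    (ν : Fin n →₀ ℕ) (f : PowerSeries R) : MvPowerSeries (Fin n) R :=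
  fun d => if h : ∃ i : ℕ, d = i • ν then PowerSeries.coeff h.choose f else 0

/-- `Λ(R) = 1 + tR[[t]]`: the multiplicative (sub)monoid of one-variable formal
power series with constant coefficient `1`. -/
def Lambda (R : Type*) [CommRing R] : Submonoid (PowerSeries R) where
  carrier := {f | PowerSeries.constantCoeff f = 1}
  one_mem' := by simp
  mul_mem' := by
    intro a b ha hb
    simp only [Set.mem_setOf_eq, map_mul] at *
    rw [ha, hb, mul_one]

/-- `Λⁿ(R) = 1 + (t₁,…,tₙ)R[[t₁,…,tₙ]]`: the multiplicative (sub)monoid of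
`n`-variable formal power series with constant coefficient `1`. -/
def LambdaN (n : ℕ) (R : Type*) [CommRing R] : Submonoid (MvPowerSeries (Fin n) R) where
  carrier := {f | MvPowerSeries.constantCoeff f = 1}
  one_mem' := by simp
  mul_mem' := by
    intro a b ha hb
    simp only [Set.mem_setOf_eq, map_mul] at *
    rw [ha, hb, mul_one]

/-- A nonzero multi-index `μ ∈ ℕⁿ` is primitive if `gcd(μ₁,…,μₙ) = 1`. -/
def IsPrimitive {n : ℕ} (μ : Fin n →₀ ℕ) : Prop :=
  Finset.univ.gcd ⇑μ = 1

namespace WittAux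
variable {R : Type*} [CommRing R] {n : ℕ}

/-- total degree of a multi-index -/
def deg (d : Fin n →₀ ℕ) : ℕ := ∑ i, d i

lemma deg_smul (i : ℕ) (ν : Fin n →₀ ℕ) : deg (i • ν) = i * deg ν := by
  simp [deg, Finset.mul_sum, Finsupp.smul_apply]

lemma deg_eq_zero_iff {d : Fin n →₀ ℕ} : deg d = 0 ↔ d = 0 := by
  simp only [deg, Finset.sum_eq_zero_iff, Finset.mem_univ, true_implies]
  constructor
  · intro h; ext i; exact h i
  · intro h i; simp [h]

lemma deg_mono {e d : Fin n →₀ ℕ} (h : e ≤ d) : deg e ≤ deg d :=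
  Finset.sum_le_sum fun i _ => Finsupp.le_def.mp h i

lemma deg_lt_of_lt {e d : Fin n →₀ ℕ} (h : e ≤ d) (hne : e ≠ d) : deg e < deg d := by
  obtain ⟨i, hi⟩ : ∃ i, e i ≠ d i := by
    by_contra hc; push_neg at hc; exact hne (Finsupp.ext hc)
  exact Finset.sum_lt_sum (fun i _ => Finsupp.le_def.mp h i)
    ⟨i, Finset.mem_univ i, lt_of_le_of_ne (Finsupp.le_def.mp h i) hi⟩

lemma smul_injective {ν : Fin n →₀ ℕ} (hν : ν ≠ 0) : Function.Injective (· • ν : ℕ → Fin n →₀ ℕ) := by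
  intro i j hij
  obtain ⟨k, hk⟩ : ∃ k, ν k ≠ 0 := by
    by_contra hc; push_neg at hc; exact hν (Finsupp.ext hc)
  have := DFunLike.congr_fun hij k
  simp only [Finsupp.smul_apply, smul_eq_mul] at this
  exact Nat.eq_of_mul_eq_mul_right (Nat.pos_of_ne_zero hk) this

lemma coeff_substMonomial_smul {ν : Fin n →₀ ℕ} (hν : ν ≠ 0) (i : ℕ) (f : PowerSeries R) :
    MvPowerSeries.coeff (i • ν) (substMonomial ν f) = PowerSeries.coeff i f := by
  rw [MvPowerSeries.coeff_apply, substMonomial, dif_pos ⟨i, rfl⟩]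
  rw [(smul_injective hν (Exists.choose_spec (⟨i, rfl⟩ : ∃ j : ℕ, i • ν = j • ν))).symm]

lemma coeff_substMonomial_of_not {ν : Fin n →₀ ℕ} {d : Fin n →₀ ℕ}
    (h : ∀ i : ℕ, d ≠ i • ν) (f : PowerSeries R) :
    MvPowerSeries.coeff d (substMonomial ν f) = 0 := by
  rw [MvPowerSeries.coeff_apply, substMonomial, dif_neg]
  rintro ⟨i, hi⟩; exact h i hi


lemma substMonomial_one {ν : Fin n →₀ ℕ} (hν : ν ≠ 0) :
    substMonomial ν (1 : PowerSeries R) = 1 := by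
  ext d
  by_cases h : ∃ i : ℕ, d = i • ν
  · obtain ⟨i, rfl⟩ := h
    rw [coeff_substMonomial_smul hν, MvPowerSeries.coeff_one, PowerSeries.coeff_one]
    by_cases hi : i = 0
    · simp [hi]
    · rw [if_neg hi, if_neg]
      intro h0
      exact hi (smul_injective hν (h0.trans (zero_smul ℕ ν).symm))
  · push_neg at h
    rw [coeff_substMonomial_of_not h, MvPowerSeries.coeff_one, if_neg]
    intro h0
    exact h 0 (h0.trans (zero_smul ℕ ν).symm)

lemma constantCoeff_substMonomial {ν : Fin n →₀ ℕ} (hν : ν ≠ 0) (f : PowerSeries R) :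
    MvPowerSeries.constantCoeff (substMonomial ν f) = PowerSeries.constantCoeff f := by
  have h0 : (0 : Fin n →₀ ℕ) = (0 : ℕ) • ν := (zero_smul ℕ ν).symm
  rw [← MvPowerSeries.coeff_zero_eq_constantCoeff, h0, coeff_substMonomial_smul hν,
    PowerSeries.coeff_zero_eq_constantCoeff]

lemma substMonomial_mul {ν : Fin n →₀ ℕ} (hν : ν ≠ 0) (f g : PowerSeries R) :
    substMonomial ν (f * g) = substMonomial ν f * substMonomial ν g := by
  ext d
  rw [MvPowerSeries.coeff_mul]
  by_cases h : ∃ i : ℕ, d = i • ν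
  · obtain ⟨i, rfl⟩ := h
    rw [coeff_substMonomial_smul hν, PowerSeries.coeff_mul]
    have hsub : (Finset.HasAntidiagonal.antidiagonal i).image
        (fun p : ℕ × ℕ => (p.1 • ν, p.2 • ν)) ⊆ Finset.HasAntidiagonal.antidiagonal (i • ν) := by
      intro q hq
      simp only [Finset.mem_image, Finset.HasAntidiagonal.mem_antidiagonal] at hq ⊢
      obtain ⟨p, hp, rfl⟩ := hq
      rw [← add_smul, hp]
    rw [← Finset.sum_subset hsub, Finset.sum_image]
    · apply Finset.sum_congr rfl
      intro p _
      rw [coeff_substMonomial_smul hν, coeff_substMonomial_smul hν]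
    · intro p _ q _ hpq
      have h1 : p.1 = q.1 := smul_injective hν (congrArg Prod.fst hpq)
      have h2 : p.2 = q.2 := smul_injective hν (congrArg Prod.snd hpq)
      exact Prod.ext h1 h2
    · intro q hq hq2
      simp only [Finset.HasAntidiagonal.mem_antidiagonal] at hq
      by_cases h1 : ∃ j : ℕ, q.1 = j • ν
      · obtain ⟨j, hj⟩ := h1
        have hji : j ≤ i := by
          have : q.1 ≤ i • ν := hq ▸ le_add_of_nonneg_right zero_le
          have := deg_mono this
          rw [hj, deg_smul, deg_smul] at this
          have hdν : 0 < deg ν := by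
            rcases Nat.eq_zero_or_pos (deg ν) with h0 | h0
            · exact absurd (deg_eq_zero_iff.mp h0) hν
            · exact h0
          exact Nat.le_of_mul_le_mul_right this hdν
        have hq2' : q.2 = (i - j) • ν := by
          have h3 : q.1 + q.2 = i • ν := hq
          rw [hj] at h3
          ext k
          have := DFunLike.congr_fun h3 k
          simp only [Finsupp.add_apply, Finsupp.smul_apply, smul_eq_mul] at this ⊢
          have hjk : j * ν k ≤ i * ν k := Nat.mul_le_mul_right _ hji
          rw [Nat.sub_mul]
          omega
        exfalso
        apply hq2
        rw [Finset.mem_image]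
        refine ⟨(j, i - j), Finset.HasAntidiagonal.mem_antidiagonal.mpr (by omega), ?_⟩
        rw [Prod.ext_iff]
        exact ⟨hj.symm, hq2'.symm⟩
      · push_neg at h1
        rw [coeff_substMonomial_of_not h1, zero_mul]
  · push_neg at h
    rw [coeff_substMonomial_of_not h]
    symm
    apply Finset.sum_eq_zero
    intro q hq
    simp only [Finset.HasAntidiagonal.mem_antidiagonal] at hq
    by_cases h1 : ∃ j : ℕ, q.1 = j • ν
    · obtain ⟨j, hj⟩ := h1
      by_cases h2 : ∃ k : ℕ, q.2 = k • ν
      · obtain ⟨k, hk⟩ := h2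
        exfalso
        exact h (j + k) (by rw [← hq, hj, hk, add_smul])
      · push_neg at h2
        rw [coeff_substMonomial_of_not h2, mul_zero]
    · push_neg at h1
      rw [coeff_substMonomial_of_not h1, zero_mul]

/-! ### Congruences modulo degree -/

/-- agreement of coefficients up to total degree `m` -/
def ME (m : ℕ) (f g : MvPowerSeries (Fin n) R) : Prop :=
  ∀ d : Fin n →₀ ℕ, deg d ≤ m → MvPowerSeries.coeff d f = MvPowerSeries.coeff d g

/-- agreement of coefficients on all indices `≤ d₀` -/
def DE (d₀ : Fin n →₀ ℕ) (f g : MvPowerSeries (Fin n) R) : Prop :=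
  ∀ e : Fin n →₀ ℕ, e ≤ d₀ → MvPowerSeries.coeff e f = MvPowerSeries.coeff e g

lemma ME.mul {m : ℕ} {f f' g g' : MvPowerSeries (Fin n) R}
    (h1 : ME m f f') (h2 : ME m g g') : ME m (f * g) (f' * g') := by
  intro d hd
  rw [MvPowerSeries.coeff_mul, MvPowerSeries.coeff_mul]
  apply Finset.sum_congr rfl
  intro q hq
  have hq' := Finset.HasAntidiagonal.mem_antidiagonal.mp hq
  have h1' : q.1 ≤ d := hq' ▸ le_add_of_nonneg_right zero_le
  have h2' : q.2 ≤ d := hq' ▸ le_add_of_nonneg_left zero_le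
  rw [h1 _ (le_trans (deg_mono h1') hd), h2 _ (le_trans (deg_mono h2') hd)]

lemma ME.refl (m : ℕ) (f : MvPowerSeries (Fin n) R) : ME m f f := fun _ _ => rfl

lemma ME.prod_one {m : ℕ} {ι : Type*} (s : Finset ι) (f : ι → MvPowerSeries (Fin n) R)
    (h : ∀ i ∈ s, ME m (f i) 1) : ME m (∏ i ∈ s, f i) 1 := by
  induction s using Finset.cons_induction with
  | empty => simpa using ME.refl m 1
  | cons a s ha ih =>
      rw [Finset.prod_cons]
      have := (h a (Finset.mem_cons_self a s)).mul (ih fun i hi => h i (Finset.mem_cons.mpr (Or.inr hi)))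
      simpa using this

lemma DE.mul {d₀ : Fin n →₀ ℕ} {f f' g g' : MvPowerSeries (Fin n) R}
    (h1 : DE d₀ f f') (h2 : DE d₀ g g') : DE d₀ (f * g) (f' * g') := by
  intro e he
  rw [MvPowerSeries.coeff_mul, MvPowerSeries.coeff_mul]
  apply Finset.sum_congr rfl
  intro q hq
  have hq' := Finset.HasAntidiagonal.mem_antidiagonal.mp hq
  have h1' : q.1 ≤ e := hq' ▸ le_add_of_nonneg_right zero_le
  have h2' : q.2 ≤ e := hq' ▸ le_add_of_nonneg_left zero_le
  rw [h1 _ (le_trans h1' he), h2 _ (le_trans h2' he)]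

lemma DE.prod {d₀ : Fin n →₀ ℕ} {ι : Type*} (s : Finset ι) (f g : ι → MvPowerSeries (Fin n) R)
    (h : ∀ i ∈ s, DE d₀ (f i) (g i)) : DE d₀ (∏ i ∈ s, f i) (∏ i ∈ s, g i) := by
  induction s using Finset.cons_induction with
  | empty => intro e _; rfl
  | cons a s ha ih =>
      rw [Finset.prod_cons, Finset.prod_cons]
      exact (h a (Finset.mem_cons_self a s)).mul (ih fun i hi => h i (Finset.mem_cons.mpr (Or.inr hi)))

/-! ### Primitive indices, finiteness -/

lemma IsPrimitive.ne_zero {μ : Fin n →₀ ℕ} (h : IsPrimitive μ) : μ ≠ 0 := by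
  rintro rfl
  rw [IsPrimitive] at h
  have h0 : Finset.univ.gcd ⇑(0 : Fin n →₀ ℕ) = 0 :=
    Finset.gcd_eq_zero_iff.mpr (fun i _ => by simp)
  rw [h0] at h
  exact zero_ne_one h

lemma IsPrimitive.deg_pos {μ : Fin n →₀ ℕ} (h : IsPrimitive μ) : 0 < deg μ :=
  Nat.pos_of_ne_zero fun h0 => IsPrimitive.ne_zero h (deg_eq_zero_iff.mp h0)

lemma finite_le_deg (m : ℕ) : {d : Fin n →₀ ℕ | deg d ≤ m}.Finite := by
  have key : ∀ d ∈ {d : Fin n →₀ ℕ | deg d ≤ m}, ∀ i, d i < m + 1 := by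
    intro d hd i
    exact Nat.lt_succ_of_le (le_trans (Finset.single_le_sum (f := fun i => d i)
      (fun i _ => Nat.zero_le _) (Finset.mem_univ i)) hd)
  apply Set.Finite.subset (Set.finite_range
    fun (g : Fin n → Fin (m + 1)) => Finsupp.equivFunOnFinite.symm fun i => (g i : ℕ))
  intro d hd
  refine ⟨fun i => ⟨d i, key d hd i⟩, ?_⟩
  show Finsupp.equivFunOnFinite.symm (fun i => (((fun i => (⟨d i, key d hd i⟩ : Fin (m+1))) i) : ℕ)) = d
  have h2 : (fun i => (((fun i => (⟨d i, key d hd i⟩ : Fin (m+1))) i) : ℕ)) = ⇑d := rfl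
  rw [h2]
  exact Finsupp.equivFunOnFinite_symm_coe d

/-- the finite set of primitive indices of total degree at most `m` -/
noncomputable def Sdeg (m : ℕ) : Finset {μ : Fin n →₀ ℕ // IsPrimitive μ} :=
  Set.Finite.toFinset (s := {μ : {μ : Fin n →₀ ℕ // IsPrimitive μ} | deg μ.1 ≤ m})
    (Set.Finite.preimage Subtype.val_injective.injOn (finite_le_deg m))

lemma mem_Sdeg {m : ℕ} {μ : {μ : Fin n →₀ ℕ // IsPrimitive μ}} :
    μ ∈ (Sdeg m : Finset _) ↔ deg μ.1 ≤ m := by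
  simp [Sdeg]

/-! ### the family and its infinite product -/

section Lam
lemma mem_LambdaS {f : PowerSeries R} : f ∈ Lambda R ↔ PowerSeries.constantCoeff f = 1 :=
  Iff.rfl

lemma mem_LambdaN {f : MvPowerSeries (Fin n) R} :
    f ∈ LambdaN n R ↔ MvPowerSeries.constantCoeff f = 1 :=
  Iff.rfl

noncomputable def fam (F : {μ : Fin n →₀ ℕ // IsPrimitive μ} → Lambda R)
    (μ : {μ : Fin n →₀ ℕ // IsPrimitive μ}) : MvPowerSeries (Fin n) R :=
  substMonomial μ.1 (F μ : PowerSeries R)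

lemma constantCoeff_fam (F : {μ : Fin n →₀ ℕ // IsPrimitive μ} → Lambda R)
    (μ : {μ : Fin n →₀ ℕ // IsPrimitive μ}) :
    MvPowerSeries.constantCoeff (fam F μ) = 1 := by
  rw [fam, constantCoeff_substMonomial (IsPrimitive.ne_zero μ.2)]
  exact mem_LambdaS.mp (F μ).2

lemma ME_fam_one {m : ℕ} (F : {μ : Fin n →₀ ℕ // IsPrimitive μ} → Lambda R)
    (μ : {μ : Fin n →₀ ℕ // IsPrimitive μ}) (h : m < deg μ.1) : ME m (fam F μ) 1 := by
  intro e he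
  by_cases hmul : ∃ i : ℕ, e = i • μ.1
  · obtain ⟨i, rfl⟩ := hmul
    rcases Nat.eq_zero_or_pos i with rfl | hi
    · have h0 : (0 : ℕ) • μ.1 = 0 := zero_smul _ _
      rw [fam, coeff_substMonomial_smul (IsPrimitive.ne_zero μ.2),
        PowerSeries.coeff_zero_eq_constantCoeff, mem_LambdaS.mp (F μ).2,
        MvPowerSeries.coeff_one, if_pos h0]
    · exfalso
      rw [deg_smul] at he
      have := IsPrimitive.deg_pos μ.2
      nlinarith
  · push_neg at hmul
    rw [fam, coeff_substMonomial_of_not hmul, MvPowerSeries.coeff_one, if_neg]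
    intro h0
    exact hmul 0 (h0.trans (zero_smul ℕ μ.1).symm)

lemma coeff_prod_stable (F : {μ : Fin n →₀ ℕ // IsPrimitive μ} → Lambda R)
    (d : Fin n →₀ ℕ) {T : Finset {μ : Fin n →₀ ℕ // IsPrimitive μ}} (hT : Sdeg (deg d) ⊆ T) :
    MvPowerSeries.coeff d (∏ μ ∈ T, fam F μ)
      = MvPowerSeries.coeff d (∏ μ ∈ Sdeg (deg d), fam F μ) := by
  rw [← Finset.prod_sdiff hT]
  have h1 : ME (deg d) (∏ μ ∈ T \ Sdeg (deg d), fam F μ) 1 :=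
    ME.prod_one _ _ (fun μ hμ => ME_fam_one F μ (by
      have := (Finset.mem_sdiff.mp hμ).2
      rw [mem_Sdeg] at this
      omega))
  have h2 := h1.mul (ME.refl (deg d) (∏ μ ∈ Sdeg (deg d), fam F μ))
  rw [h2 d le_rfl, one_mul]

variable [TopologicalSpace R] [DiscreteTopology R]

noncomputable def Pfun (F : {μ : Fin n →₀ ℕ // IsPrimitive μ} → Lambda R) : MvPowerSeries (Fin n) R :=
  fun d => MvPowerSeries.coeff d (∏ μ ∈ Sdeg (deg d), fam F μ)

lemma hasProd_fam (F : {μ : Fin n →₀ ℕ // IsPrimitive μ} → Lambda R) :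
    HasProd (fam F) (Pfun F) := by
  rw [HasProd]
  apply tendsto_pi_nhds.mpr
  intro d
  rw [nhds_discrete R, Filter.tendsto_pure]
  filter_upwards [Filter.eventually_ge_atTop (Sdeg (deg d))] with T hT
  exact coeff_prod_stable F d hT

lemma multipliable_fam (F : {μ : Fin n →₀ ℕ // IsPrimitive μ} → Lambda R) :
    Multipliable (fam F) := ⟨Pfun F, hasProd_fam F⟩

instance instT2MvPS {σ : Type*} {R' : Type*} [TopologicalSpace R'] [T2Space R'] :
    T2Space (MvPowerSeries σ R') := Pi.t2Space

lemma coeff_TT (F : {μ : Fin n →₀ ℕ // IsPrimitive μ} → Lambda R) (m : ℕ) (d : Fin n →₀ ℕ)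
    (hm : deg d ≤ m) :
    MvPowerSeries.coeff d (∏' μ, fam F μ) = MvPowerSeries.coeff d (∏ μ ∈ Sdeg m, fam F μ) := by
  rw [(hasProd_fam F).tprod_eq]
  have hsub : Sdeg (n := n) (deg d) ⊆ Sdeg m := by
    intro μ hμ
    rw [mem_Sdeg] at *
    omega
  rw [coeff_prod_stable F d (T := Sdeg m) hsub]
  rfl

/-! ### gcd and primitive part -/

noncomputable def gcdd (d : Fin n →₀ ℕ) : ℕ := Finset.univ.gcd ⇑d

noncomputable def primPart (d : Fin n →₀ ℕ) : Fin n →₀ ℕ :=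
  Finsupp.mapRange (· / gcdd d) (Nat.zero_div _) d

lemma primPart_apply (d : Fin n →₀ ℕ) (i : Fin n) : primPart d i = d i / gcdd d :=
  Finsupp.mapRange_apply

lemma gcdd_dvd (d : Fin n →₀ ℕ) (i : Fin n) : gcdd d ∣ d i :=
  Finset.gcd_dvd (Finset.mem_univ i)

lemma exists_ne_zero {d : Fin n →₀ ℕ} (hd : d ≠ 0) : ∃ i, d i ≠ 0 := by
  by_contra hc
  push_neg at hc
  exact hd (Finsupp.ext hc)

lemma gcdd_ne_zero {d : Fin n →₀ ℕ} (hd : d ≠ 0) : gcdd d ≠ 0 := by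
  intro h
  obtain ⟨i, hi⟩ := exists_ne_zero hd
  exact hi (Finset.gcd_eq_zero_iff.mp h i (Finset.mem_univ i))

lemma smul_primPart {d : Fin n →₀ ℕ} (hd : d ≠ 0) : gcdd d • primPart d = d := by
  ext i
  rw [Finsupp.smul_apply, primPart_apply, smul_eq_mul]
  exact Nat.mul_div_cancel' (gcdd_dvd d i)

lemma isPrimitive_primPart {d : Fin n →₀ ℕ} (hd : d ≠ 0) : IsPrimitive (primPart d) := by
  obtain ⟨i, hi⟩ := exists_ne_zero hd
  rw [IsPrimitive]
  have h1 : Finset.univ.gcd ⇑(primPart d) = Finset.univ.gcd (fun j => d j / Finset.univ.gcd ⇑d) :=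
    Finset.gcd_congr rfl fun a _ => primPart_apply d a
  rw [h1]
  exact Finset.gcd_div_eq_one (Finset.mem_univ i) hi

lemma primPart_le {d : Fin n →₀ ℕ} : primPart d ≤ d := by
  rw [Finsupp.le_def]
  intro i
  rw [primPart_apply]
  exact Nat.div_le_self _ _

lemma gcdd_smul {i : ℕ} {μ : Fin n →₀ ℕ} (hμ : IsPrimitive μ) : gcdd (i • μ) = i := by
  rw [gcdd]
  have h1 : Finset.univ.gcd ⇑(i • μ) = Finset.univ.gcd (fun k => i * μ k) :=
    Finset.gcd_congr rfl fun a _ => by rw [Finsupp.smul_apply, smul_eq_mul]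
  rw [h1, Finset.gcd_mul_left, normalize_eq, hμ, mul_one]

lemma primPart_smul {i : ℕ} {μ : Fin n →₀ ℕ} (hμ : IsPrimitive μ) (hi : i ≠ 0) :
    primPart (i • μ) = μ := by
  ext k
  rw [primPart_apply, gcdd_smul hμ, Finsupp.smul_apply, smul_eq_mul,
    Nat.mul_div_cancel_left _ (Nat.pos_of_ne_zero hi)]

/-! ### the key triangularity lemma -/

section Key

lemma keyB (F F' : {μ : Fin n →₀ ℕ // IsPrimitive μ} → Lambda R) (d : Fin n →₀ ℕ) (hd : d ≠ 0)
    (hag : ∀ (μ : {μ : Fin n →₀ ℕ // IsPrimitive μ}) (i : ℕ), i * deg μ.1 < deg d →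
      PowerSeries.coeff i (F μ : PowerSeries R) = PowerSeries.coeff i (F' μ : PowerSeries R)) :
    MvPowerSeries.coeff d (∏' μ, fam F μ)
      - PowerSeries.coeff (gcdd d) (F ⟨primPart d, isPrimitive_primPart hd⟩ : PowerSeries R)
    = MvPowerSeries.coeff d (∏' μ, fam F' μ)
      - PowerSeries.coeff (gcdd d) (F' ⟨primPart d, isPrimitive_primPart hd⟩ : PowerSeries R) := by
  set μd : {μ : Fin n →₀ ℕ // IsPrimitive μ} := ⟨primPart d, isPrimitive_primPart hd⟩ with hμd
  set m := deg d with hm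
  have hμd_mem : μd ∈ Sdeg (n := n) m := mem_Sdeg.mpr (deg_mono primPart_le)
  rw [coeff_TT F m d le_rfl, coeff_TT F' m d le_rfl,
    ← Finset.mul_prod_erase _ _ hμd_mem, ← Finset.mul_prod_erase _ _ hμd_mem,
    MvPowerSeries.coeff_mul, MvPowerSeries.coeff_mul]
  have hd0mem : ((d, 0) : (Fin n →₀ ℕ) × (Fin n →₀ ℕ)) ∈ Finset.HasAntidiagonal.antidiagonal d :=
    Finset.HasAntidiagonal.mem_antidiagonal.mpr (add_zero d)
  rw [← Finset.add_sum_erase _ _ hd0mem, ← Finset.add_sum_erase _ _ hd0mem]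
  have key1 : ∀ (G : {μ : Fin n →₀ ℕ // IsPrimitive μ} → Lambda R),
      MvPowerSeries.coeff d (fam G μd)
        * MvPowerSeries.coeff 0 (∏ μ ∈ (Sdeg m).erase μd, fam G μ)
      = PowerSeries.coeff (gcdd d) (G μd : PowerSeries R) := by
    intro G
    have hc : MvPowerSeries.coeff 0 (∏ μ ∈ (Sdeg m).erase μd, fam G μ) = 1 := by
      rw [MvPowerSeries.coeff_zero_eq_constantCoeff, map_prod]
      exact Finset.prod_eq_one fun μ _ => constantCoeff_fam G μ
    rw [hc, mul_one, fam]
    conv_lhs => rw [show d = gcdd d • μd.1 from (smul_primPart hd).symm]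
    exact coeff_substMonomial_smul (IsPrimitive.ne_zero μd.2) _ _
  rw [key1 F, key1 F']
  suffices hS : (∑ q ∈ (Finset.HasAntidiagonal.antidiagonal d).erase (d, 0),
        MvPowerSeries.coeff q.1 (fam F μd)
          * MvPowerSeries.coeff q.2 (∏ μ ∈ (Sdeg m).erase μd, fam F μ))
      = (∑ q ∈ (Finset.HasAntidiagonal.antidiagonal d).erase (d, 0),
        MvPowerSeries.coeff q.1 (fam F' μd)
          * MvPowerSeries.coeff q.2 (∏ μ ∈ (Sdeg m).erase μd, fam F' μ)) by
    rw [hS]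
    ring
  have hDE : DE d (∏ μ ∈ (Sdeg m).erase μd, fam F μ) (∏ μ ∈ (Sdeg m).erase μd, fam F' μ) := by
    apply DE.prod
    intro μ hμ
    have hμne : μ ≠ μd := (Finset.mem_erase.mp hμ).1
    intro e he
    by_cases hmul : ∃ i : ℕ, e = i • μ.1
    · obtain ⟨i, rfl⟩ := hmul
      rw [fam, fam, coeff_substMonomial_smul (IsPrimitive.ne_zero μ.2),
        coeff_substMonomial_smul (IsPrimitive.ne_zero μ.2)]
      apply hag
      have hne : i • μ.1 ≠ d := by
        intro hcontra
        apply hμne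
        have hi : i ≠ 0 := by
          rintro rfl
          rw [zero_smul] at hcontra
          exact hd hcontra.symm
        apply Subtype.ext
        exact (primPart_smul μ.2 hi).symm.trans (congrArg primPart hcontra)
      have := deg_lt_of_lt he hne
      rwa [deg_smul] at this
    · push_neg at hmul
      rw [fam, fam, coeff_substMonomial_of_not hmul, coeff_substMonomial_of_not hmul]
  apply Finset.sum_congr rfl
  intro q hq
  obtain ⟨hqne, hqmem⟩ := Finset.mem_erase.mp hq
  have hadd : q.1 + q.2 = d := Finset.HasAntidiagonal.mem_antidiagonal.mp hqmem
  have hq1ne : q.1 ≠ d := by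
    intro h1
    apply hqne
    have : q.2 = 0 := by
      have := h1 ▸ hadd
      exact (add_eq_left).mp this
    exact Prod.ext h1 this
  have hq1le : q.1 ≤ d := hadd ▸ le_add_of_nonneg_right zero_le
  have hq2le : q.2 ≤ d := hadd ▸ le_add_of_nonneg_left zero_le
  have hfac1 : MvPowerSeries.coeff q.1 (fam F μd) = MvPowerSeries.coeff q.1 (fam F' μd) := by
    by_cases hmul : ∃ i : ℕ, q.1 = i • μd.1
    · obtain ⟨i, hi⟩ := hmul
      rw [fam, fam, hi, coeff_substMonomial_smul (IsPrimitive.ne_zero μd.2),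
        coeff_substMonomial_smul (IsPrimitive.ne_zero μd.2)]
      apply hag
      have := deg_lt_of_lt hq1le hq1ne
      rw [hi, deg_smul] at this
      exact this
    · push_neg at hmul
      rw [fam, fam, coeff_substMonomial_of_not hmul, coeff_substMonomial_of_not hmul]
  rw [hfac1, hDE q.2 hq2le]

lemma constantCoeff_TT (F : {μ : Fin n →₀ ℕ // IsPrimitive μ} → Lambda R) :
    MvPowerSeries.constantCoeff (∏' μ, fam F μ) = 1 := by
  have h0 : deg (0 : Fin n →₀ ℕ) ≤ 0 := le_of_eq (deg_eq_zero_iff.mpr rfl)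
  rw [← MvPowerSeries.coeff_zero_eq_constantCoeff, coeff_TT F 0 0 h0,
    MvPowerSeries.coeff_zero_eq_constantCoeff, map_prod]
  exact Finset.prod_eq_one fun μ _ => constantCoeff_fam F μ

lemma TT_injective (F F' : {μ : Fin n →₀ ℕ // IsPrimitive μ} → Lambda R)
    (h : (∏' μ, fam F μ) = (∏' μ, fam F' μ)) : F = F' := by
  have main : ∀ k : ℕ, ∀ (μ : {μ : Fin n →₀ ℕ // IsPrimitive μ}) (i : ℕ), i * deg μ.1 = k →
      PowerSeries.coeff i (F μ : PowerSeries R) = PowerSeries.coeff i (F' μ : PowerSeries R) := by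
    intro k
    induction k using Nat.strong_induction_on with
    | _ k ih =>
      intro μ i hk
      rcases Nat.eq_zero_or_pos i with rfl | hi
      · rw [PowerSeries.coeff_zero_eq_constantCoeff]
        exact (mem_LambdaS.mp (F μ).2).trans (mem_LambdaS.mp (F' μ).2).symm
      · have hine : i ≠ 0 := Nat.pos_iff_ne_zero.mp hi
        have hdne : (i • μ.1 : Fin n →₀ ℕ) ≠ 0 := by
          intro h0
          have := deg_eq_zero_iff.mpr h0
          rw [deg_smul] at this
          have := IsPrimitive.deg_pos μ.2
          nlinarith
        have hdeg : deg (i • μ.1) = k := by rw [deg_smul, hk]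
        have hag : ∀ (μ' : {μ : Fin n →₀ ℕ // IsPrimitive μ}) (i' : ℕ),
            i' * deg μ'.1 < deg (i • μ.1) →
            PowerSeries.coeff i' (F μ' : PowerSeries R)
              = PowerSeries.coeff i' (F' μ' : PowerSeries R) := by
          intro μ' i' h'
          rw [hdeg] at h'
          exact ih _ h' μ' i' rfl
        have hkey := keyB F F' (i • μ.1) hdne hag
        rw [h] at hkey
        have hsub : (⟨primPart (i • μ.1), isPrimitive_primPart hdne⟩ :
            {μ : Fin n →₀ ℕ // IsPrimitive μ}) = μ := Subtype.ext (primPart_smul μ.2 hine)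
        rw [hsub, gcdd_smul μ.2] at hkey
        exact sub_right_injective hkey
  funext μ
  apply Subtype.ext
  apply PowerSeries.ext
  intro i
  exact main (i * deg μ.1) μ i rfl

/-- truncation of a coefficient family strictly below total degree `N` -/
noncomputable def prevF (w : (Fin n →₀ ℕ) → R) (N : ℕ) :
    {μ : Fin n →₀ ℕ // IsPrimitive μ} → Lambda R :=
  fun μ => ⟨PowerSeries.mk (fun i => if i = 0 then 1 else
      if i * deg μ.1 < N then w (i • μ.1) else 0),
    by rw [mem_LambdaS, PowerSeries.constantCoeff_mk]; simp⟩

/-- the coefficients of the inverse image of `G`, by strong recursion on total degree -/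
noncomputable def wcoef (G : MvPowerSeries (Fin n) R) : (Fin n →₀ ℕ) → R
  | d => MvPowerSeries.coeff d G - MvPowerSeries.coeff d (∏' μ, fam (fun μ =>
      ⟨PowerSeries.mk (fun i => if i = 0 then 1 else
          if h : i * deg μ.1 < deg d then wcoef G (i • μ.1) else 0),
        by rw [mem_LambdaS, PowerSeries.constantCoeff_mk]; simp⟩) μ)
  termination_by d => deg d
  decreasing_by
    all_goals simp only [deg_smul]
    all_goals exact h

lemma wcoef_eq (G : MvPowerSeries (Fin n) R) (d : Fin n →₀ ℕ) :
    wcoef G d = MvPowerSeries.coeff d G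
      - MvPowerSeries.coeff d (∏' μ, fam (prevF (wcoef G) (deg d)) μ) := by
  rw [wcoef]
  congr 1

/-- the inverse family -/
noncomputable def FofG (G : MvPowerSeries (Fin n) R) :
    {μ : Fin n →₀ ℕ // IsPrimitive μ} → Lambda R :=
  fun μ => ⟨PowerSeries.mk (fun i => if i = 0 then 1 else wcoef G (i • μ.1)),
    by rw [mem_LambdaS, PowerSeries.constantCoeff_mk]; simp⟩

lemma TT_FofG (G : MvPowerSeries (Fin n) R)
    (hG : MvPowerSeries.constantCoeff G = 1) :
    (∏' μ, fam (FofG G) μ) = G := by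
  apply MvPowerSeries.ext
  intro d
  by_cases hd : d = 0
  · subst hd
    rw [MvPowerSeries.coeff_zero_eq_constantCoeff, constantCoeff_TT, hG]
  · have hag : ∀ (μ : {μ : Fin n →₀ ℕ // IsPrimitive μ}) (i : ℕ), i * deg μ.1 < deg d →
        PowerSeries.coeff i (FofG G μ : PowerSeries R)
          = PowerSeries.coeff i (prevF (wcoef G) (deg d) μ : PowerSeries R) := by
      intro μ i hlt
      rw [FofG, prevF]
      simp only [PowerSeries.coeff_mk]
      by_cases h0 : i = 0
      · simp [h0]
      · rw [if_neg h0, if_neg h0, if_pos hlt]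
    have hkey := keyB (FofG G) (prevF (wcoef G) (deg d)) d hd hag
    have hgne : gcdd d ≠ 0 := gcdd_ne_zero hd
    have hc1 : PowerSeries.coeff (gcdd d)
        ((FofG G ⟨primPart d, isPrimitive_primPart hd⟩ : PowerSeries R)) = wcoef G d := by
      rw [FofG]
      simp only [PowerSeries.coeff_mk]
      rw [if_neg hgne]
      congr 1
      exact smul_primPart hd
    have hdegeq : gcdd d * deg (primPart d) = deg d := by
      conv_rhs => rw [← smul_primPart hd]
      rw [deg_smul]
    have hc2 : PowerSeries.coeff (gcdd d)
        ((prevF (wcoef G) (deg d) ⟨primPart d, isPrimitive_primPart hd⟩ : PowerSeries R)) = 0 := by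
      rw [prevF]
      simp only [PowerSeries.coeff_mk]
      rw [if_neg hgne, if_neg]
      rw [hdegeq]
      omega
    rw [hc1, hc2, sub_zero] at hkey
    have hw := wcoef_eq G d
    rw [hw] at hkey
    linear_combination hkey

lemma fam_mul (F F' : {μ : Fin n →₀ ℕ // IsPrimitive μ} → Lambda R)
    (μ : {μ : Fin n →₀ ℕ // IsPrimitive μ}) : fam (F * F') μ = fam F μ * fam F' μ := by
  rw [fam, fam, fam]
  have : ((F * F') μ : PowerSeries R) = (F μ : PowerSeries R) * (F' μ : PowerSeries R) := rfl
  rw [this, substMonomial_mul (IsPrimitive.ne_zero μ.2)]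

lemma TT_mul (F F' : {μ : Fin n →₀ ℕ // IsPrimitive μ} → Lambda R) :
    (∏' μ, fam (F * F') μ) = (∏' μ, fam F μ) * (∏' μ, fam F' μ) := by
  apply MvPowerSeries.ext
  intro d
  have MEA : ME (deg d) (∏' μ, fam F μ) (∏ μ ∈ Sdeg (deg d), fam F μ) :=
    fun e he => coeff_TT F (deg d) e he
  have MEB : ME (deg d) (∏' μ, fam F' μ) (∏ μ ∈ Sdeg (deg d), fam F' μ) :=
    fun e he => coeff_TT F' (deg d) e he
  rw [(MEA.mul MEB) d le_rfl, ← Finset.prod_mul_distrib, coeff_TT (F * F') (deg d) d le_rfl]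
  exact congrArg (MvPowerSeries.coeff d) (Finset.prod_congr rfl fun μ _ => fam_mul F F' μ)

lemma TT_one :
    (∏' μ, fam (1 : {μ : Fin n →₀ ℕ // IsPrimitive μ} → Lambda R) μ) = (1 : MvPowerSeries (Fin n) R) := by
  have h1 : (fam (1 : {μ : Fin n →₀ ℕ // IsPrimitive μ} → Lambda R))
      = fun _ => (1 : MvPowerSeries (Fin n) R) := by
    funext μ
    rw [fam]
    have : ((1 : {μ : Fin n →₀ ℕ // IsPrimitive μ} → Lambda R) μ : PowerSeries R) = 1 := rfl
    rw [this, substMonomial_one (IsPrimitive.ne_zero μ.2)]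
  rw [h1, tprod_one]

end Key

end Lam

end WittAux

/-- The map `(f_μ)_μ ↦ ∏_μ f_μ(t^μ)`, over the primitive multi-indices `μ`,
is a group isomorphism from the direct product `∏_{μ primitive} Λ(R)` onto
`Λⁿ(R)`: every such family is multipliable (in the coefficientwise topology,
the coefficient ring being discrete), and there is a multiplicative equivalence
given by the infinite product. -/
theorem lambdaN_iso_prod_lambda
    (R : Type*) [CommRing R] [TopologicalSpace R] [DiscreteTopology R]
    (n : ℕ) (hn : 1 ≤ n) :
    (∀ F : {μ : Fin n →₀ ℕ // IsPrimitive μ} → Lambda R,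
      Multipliable (fun μ : {μ : Fin n →₀ ℕ // IsPrimitive μ} =>
        substMonomial μ.1 ((F μ : PowerSeries R)))) ∧
    ∃ e : ({μ : Fin n →₀ ℕ // IsPrimitive μ} → Lambda R) ≃* LambdaN n R,
      ∀ F : {μ : Fin n →₀ ℕ // IsPrimitive μ} → Lambda R,
        ((e F : LambdaN n R) : MvPowerSeries (Fin n) R)
          = ∏' μ : {μ : Fin n →₀ ℕ // IsPrimitive μ},
              substMonomial μ.1 ((F μ : PowerSeries R)) := by
  constructor
  · intro F
    exact WittAux.multipliable_fam F
  · let φ : ({μ : Fin n →₀ ℕ // IsPrimitive μ} → Lambda R) →* LambdaN n R :=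
      { toFun := fun F => ⟨∏' μ, WittAux.fam F μ,
          WittAux.mem_LambdaN.mpr (WittAux.constantCoeff_TT F)⟩
        map_one' := Subtype.ext WittAux.TT_one
        map_mul' := fun F F' => Subtype.ext (WittAux.TT_mul F F') }
    have hinj : Function.Injective φ := fun F F' h =>
      WittAux.TT_injective F F' (congrArg Subtype.val h)
    have hsurj : Function.Surjective φ := fun G =>
      ⟨WittAux.FofG G.1, Subtype.ext (WittAux.TT_FofG G.1 (WittAux.mem_LambdaN.mp G.2))⟩
    exact ⟨MulEquiv.ofBijective φ ⟨hinj, hsurj⟩, fun F => rfl⟩
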